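/- For 1 ≤ p < ∞, the function ‖x₁,...,xₙ‖_p := ((1/n!)·Σ_{j₁}⋯Σ_{jₙ} |det(x_{i,j_k})|^p)^{1/p} on (ℓ^p)ⁿ, where x_{i,j} denotes the j-th coordinate of xᵢ and the determinant is of the n×n matrix whose (i,k) entry is x_{i,j_k}, satisfies the triangle inequality in the first variable: ‖x₁ + x', x₂,...,xₙ‖_p ≤ ‖x₁,...,xₙ‖_p + ‖x', x₂,...,xₙ‖_p. -/

import Mathlib

open scoped BigOperators
set_option maxHeartbeats 1000000

/-- The `n`-norm `‖x₁,…,xₙ‖_p = ((1/n!) Σ_{j₁,…,jₙ} |det[x_{i,j_k}]|^p)^{1/p}` on `ℓ^p`. -/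
noncomputable def lpNNorm (p : ℝ) {n : ℕ}
    (x : Fin n → lp (fun _ : ℕ => ℝ) (ENNReal.ofReal p)) : ℝ :=
  ((1 / (n.factorial : ℝ)) * ∑' j : Fin n → ℕ,
    |Matrix.det (Matrix.of fun i k => (x i : ∀ _ : ℕ, ℝ) (j k))| ^ p) ^ (1 / p)

/-- Summability of a product of summable nonneg families over a pi type. -/
lemma summable_pi_prod : ∀ (m : ℕ) (g : Fin m → ℕ → ℝ),
    (∀ i k, 0 ≤ g i k) → (∀ i, Summable (g i)) →
    Summable (fun j : Fin m → ℕ => ∏ i, g i (j i)) := by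
  intro m
  induction m with
  | zero =>
    intro g _ _
    exact .of_finite
  | succ m ih =>
    intro g hg0 hg
    have hprod : Summable (fun j : Fin m → ℕ => ∏ i : Fin m, g i.succ (j i)) :=
      ih (fun i => g i.succ) (fun i k => hg0 i.succ k) (fun i => hg i.succ)
    have h2 : Summable (fun x : ℕ × (Fin m → ℕ) =>
        g 0 x.1 * ∏ i : Fin m, g i.succ (x.2 i)) := by
      apply Summable.mul_of_nonneg (hg 0) hprod (fun k => hg0 0 k)
      exact fun j => Finset.prod_nonneg fun i _ => hg0 i.succ (j i)
    have key := (Fin.consEquiv (fun _ : Fin (m + 1) => ℕ)).summable_iff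
      (f := fun j : Fin (m+1) → ℕ => ∏ i, g i (j i))
    rw [← key]
    refine h2.congr fun x => ?_
    show g 0 x.1 * ∏ i : Fin m, g i.succ (x.2 i)
      = ∏ i : Fin (m + 1), g i (Fin.cons (α := fun _ => ℕ) x.1 x.2 i)
    rw [Fin.prod_univ_succ]
    simp

lemma memℓp_det (p : ℝ) (hp : 1 ≤ p) {n : ℕ}
    (y : Fin n → lp (fun _ : ℕ => ℝ) (ENNReal.ofReal p)) :
    Memℓp (fun j : Fin n → ℕ =>
      Matrix.det (Matrix.of fun i k => (y i : ∀ _ : ℕ, ℝ) (j k))) (ENNReal.ofReal p) := by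
  have hp0 : 0 < p := lt_of_lt_of_le one_pos hp
  have htr : (ENNReal.ofReal p).toReal = p := ENNReal.toReal_ofReal hp0.le
  have key : ∀ σ : Equiv.Perm (Fin n),
      Memℓp (fun j : Fin n → ℕ => ∏ i, (y (σ i) : ∀ _ : ℕ, ℝ) (j i))
        (ENNReal.ofReal p) := by
    intro σ
    apply memℓp_gen
    rw [htr]
    have : Summable (fun j : Fin n → ℕ => ∏ i, ‖(y (σ i) : ∀ _ : ℕ, ℝ) (j i)‖ ^ p) := by
      apply summable_pi_prod n (fun i k => ‖(y (σ i) : ∀ _ : ℕ, ℝ) k‖ ^ p)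
      · intro i k; positivity
      · intro i
        have := (lp.memℓp (y (σ i))).summable (by rw [htr]; exact hp0)
        rwa [htr] at this
    refine this.congr fun j => ?_
    rw [norm_prod, ← Real.finset_prod_rpow _ _ (fun i _ => norm_nonneg _)]
  have : (fun j : Fin n → ℕ =>
      Matrix.det (Matrix.of fun i k => (y i : ∀ _ : ℕ, ℝ) (j k))) =
      fun j : Fin n → ℕ => ∑ σ : Equiv.Perm (Fin n),
        ((Equiv.Perm.sign σ : ℤ) : ℝ) * ∏ i, (y (σ i) : ∀ _ : ℕ, ℝ) (j i) := by
    funext j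
    rw [Matrix.det_apply]
    refine Finset.sum_congr rfl fun σ _ => ?_
    simp [Units.smul_def, zsmul_eq_mul]
  rw [this]
  exact Memℓp.finset_sum Finset.univ
    (f := fun σ (j : Fin n → ℕ) =>
      ((Equiv.Perm.sign σ : ℤ) : ℝ) * ∏ i, (y (σ i) : ∀ _ : ℕ, ℝ) (j i))
    (fun σ _ => (key σ).const_mul _)

lemma lpNNorm_eq_norm (p : ℝ) (hp : 1 ≤ p) {n : ℕ}
    (y : Fin n → lp (fun _ : ℕ => ℝ) (ENNReal.ofReal p)) :
    lpNNorm p y = (1 / (n.factorial : ℝ)) ^ (1 / p) *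
      ‖(⟨_, memℓp_det p hp y⟩ :
        lp (fun _ : Fin n → ℕ => ℝ) (ENNReal.ofReal p))‖ := by
  have hp0 : 0 < p := lt_of_lt_of_le one_pos hp
  have htr : (ENNReal.ofReal p).toReal = p := ENNReal.toReal_ofReal hp0.le
  rw [lpNNorm, lp.norm_eq_tsum_rpow (by rw [htr]; exact hp0), htr]
  rw [Real.mul_rpow (by positivity) (tsum_nonneg fun j => by positivity)]
  congr 1

/-- For `1 ≤ p < ∞`, `‖·,…,·‖_p` on `ℓ^p` satisfies the triangle inequality in the
first variable: `‖x₁ + x', x₂, …, xₙ‖_p ≤ ‖x₁,…,xₙ‖_p + ‖x', x₂,…,xₙ‖_p`. -/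
theorem stmt18 (p : ℝ) (hp : 1 ≤ p) (n : ℕ)
    (x : Fin (n + 1) → lp (fun _ : ℕ => ℝ) (ENNReal.ofReal p))
    (x' : lp (fun _ : ℕ => ℝ) (ENNReal.ofReal p)) :
    lpNNorm p (Function.update x 0 (x 0 + x')) ≤
      lpNNorm p x + lpNNorm p (Function.update x 0 x') := by
  haveI : Fact (1 ≤ ENNReal.ofReal p) := ⟨ENNReal.one_le_ofReal.mpr hp⟩
  rw [lpNNorm_eq_norm p hp, lpNNorm_eq_norm p hp, lpNNorm_eq_norm p hp, ← mul_add]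
  apply mul_le_mul_of_nonneg_left _ (by positivity)
  set f1 : lp (fun _ : Fin (n+1) → ℕ => ℝ) (ENNReal.ofReal p) :=
    ⟨_, memℓp_det p hp (Function.update x 0 (x 0 + x'))⟩
  set f2 : lp (fun _ : Fin (n+1) → ℕ => ℝ) (ENNReal.ofReal p) := ⟨_, memℓp_det p hp x⟩
  set f3 : lp (fun _ : Fin (n+1) → ℕ => ℝ) (ENNReal.ofReal p) :=
    ⟨_, memℓp_det p hp (Function.update x 0 x')⟩
  have hkey : f1 = f2 + f3 := by
    apply Subtype.ext
    funext j
    have hrow : ∀ (v : lp (fun _ : ℕ => ℝ) (ENNReal.ofReal p)),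
        (Matrix.of fun i k => ((Function.update x 0 v i : lp (fun _ : ℕ => ℝ)
          (ENNReal.ofReal p)) : ∀ _ : ℕ, ℝ) (j k)) =
        Matrix.updateRow (Matrix.of fun i k => (x i : ∀ _ : ℕ, ℝ) (j k)) 0
          (fun k => (v : ∀ _ : ℕ, ℝ) (j k)) := by
      intro v
      ext i k
      by_cases h : i = 0 <;>
        simp [h, Function.update_apply, Matrix.updateRow_apply]
    show (Matrix.det _ : ℝ) = (Matrix.det _ : ℝ) + (Matrix.det _ : ℝ)
    rw [hrow, hrow]
    have hadd : (fun k => ((x 0 + x' : lp (fun _ : ℕ => ℝ) (ENNReal.ofReal p)) :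
        ∀ _ : ℕ, ℝ) (j k)) =
        (fun k => (x 0 : ∀ _ : ℕ, ℝ) (j k)) + (fun k => (x' : ∀ _ : ℕ, ℝ) (j k)) := by
      funext k; simp [lp.coeFn_add]
    rw [hadd, Matrix.det_updateRow_add]
    congr 1
    congr 1
    exact Matrix.updateRow_eq_self _ 0
  rw [hkey]
  exact norm_add_le f2 f3
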